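/- arXiv:2603.16698 — 2 statements merged into one kernel-verified Lean document; each statement's English description precedes it below -/
import Mathlib

section
/- Let a = (a_1,…,a_l) be a strictly increasing sequence in [2n] with l ≤ 2n. Then 0 ≤ l − |rem(a)| ≤ min(2n − l, l); in particular |rem(a)| ≥ 2(l − n). -/
/-- The removal subword `rem a` of a column `a = (a_1, …, a_l)` (written 0-indexed as a
list): `rem a = []` if `l ≤ 1`; if `l ≥ 2`, `a_l` is even, `a_{l-1} = a_l − 1` and
`a_l < 2l − |rem (a_1,…,a_{l-2})| − 1`, then `rem a = rem (a_1,…,a_{l-2}) ++ [a_{l-1}, a_l]`;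
otherwise `rem a = rem (a_1,…,a_{l-1})`. -/
def rem (a : List ℕ) : List ℕ :=
  if a.length ≤ 1 then []
  else
    if a.getLast! % 2 = 0 ∧ a.dropLast.getLast! + 1 = a.getLast! ∧
        a.getLast! + (rem a.dropLast.dropLast).length + 1 < 2 * a.length then
      rem a.dropLast.dropLast ++ [a.dropLast.getLast!, a.getLast!]
    else
      rem a.dropLast
termination_by a.length
decreasing_by
  all_goals (simp [List.length_dropLast]; omega)

lemma rem_len_even (a : List ℕ) : (rem a).length % 2 = 0 := by
  rw [rem]
  split
  · simp
  · split
    · have := rem_len_even a.dropLast.dropLast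
      simp; omega
    · exact rem_len_even a.dropLast
termination_by a.length
decreasing_by
  all_goals (simp [List.length_dropLast]; omega)

lemma rem_len_le (a : List ℕ) : (rem a).length ≤ a.length := by
  rw [rem]
  split
  · simp
  · split
    · have := rem_len_le a.dropLast.dropLast
      simp at this ⊢; omega
    · have := rem_len_le a.dropLast
      simp [List.length_dropLast] at this; omega
termination_by a.length
decreasing_by
  all_goals (simp [List.length_dropLast]; omega)

lemma getLast!_eq' (a : List ℕ) (h : a ≠ []) : a.getLast! = a.getLast h := by
  rw [List.getLast!_eq_getElem!, List.getLast_eq_getElem]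
  have : a.length - 1 < a.length := by
    have := List.length_pos_iff.mpr h; omega
  rw [getElem!_pos a _ this]

lemma sorted_last_lt (a : List ℕ) (hs : a.Pairwise (· < ·)) (h2 : 2 ≤ a.length) :
    a.dropLast.getLast! < a.getLast! := by
  have hne : a ≠ [] := by rintro rfl; simp at h2
  have hdne : a.dropLast ≠ [] := by
    rw [← List.length_pos_iff, List.length_dropLast]; omega
  rw [getLast!_eq' a hne, getLast!_eq' _ hdne, List.getLast_eq_getElem,
    List.getLast_eq_getElem, List.getElem_dropLast]
  exact List.pairwise_iff_getElem.mp hs _ _ (by simpa using by omega) (by omega)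
    (by simp [List.length_dropLast]; omega)

lemma rem_odd (a : List ℕ) (h : a.getLast! % 2 = 1) : rem a = rem a.dropLast := by
  rw [rem]
  split
  · rw [rem]
    have : a.dropLast.length ≤ 1 := by simp [List.length_dropLast]; omega
    rw [if_pos this]
  · split
    · omega
    · rfl

lemma mem_of_getLast!_dropLast (a : List ℕ) (h2 : 2 ≤ a.length) :
    a.dropLast.getLast! ∈ a := by
  have hdne : a.dropLast ≠ [] := by
    rw [← List.length_pos_iff, List.length_dropLast]; omega
  rw [getLast!_eq' _ hdne]
  exact (List.dropLast_sublist a).mem (List.getLast_mem hdne)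

lemma rem_main (a : List ℕ) (hs : a.Pairwise (· < ·)) (h1 : ∀ x ∈ a, 1 ≤ x)
    (hne : a ≠ []) :
    2 * a.length ≤ (rem a).length + a.getLast! + a.getLast! % 2 := by
  have hx1 : 1 ≤ a.getLast! := by
    rw [getLast!_eq' a hne]; exact h1 _ (List.getLast_mem hne)
  by_cases hl : a.length ≤ 1
  · have hl1 : a.length = 1 := by
      have := List.length_pos_iff.mpr hne; omega
    rw [rem, if_pos hl]
    simp [hl1] at hx1 ⊢; omega
  · push_neg at hl
    have hyx : a.dropLast.getLast! < a.getLast! := sorted_last_lt a hs hl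
    have hy1 : 1 ≤ a.dropLast.getLast! := h1 _ (mem_of_getLast!_dropLast a hl)
    have hds : a.dropLast.Pairwise (· < ·) := hs.sublist (List.dropLast_sublist a)
    have hd1 : ∀ x ∈ a.dropLast, 1 ≤ x := fun x hx =>
      h1 x ((List.dropLast_sublist a).mem hx)
    rw [rem, if_neg (by omega)]
    split
    · rename_i hmatch
      obtain ⟨he, hey, hlt⟩ := hmatch
      by_cases hl3 : 3 ≤ a.length
      · have hne'' : a.dropLast.dropLast ≠ [] := by
          rw [← List.length_pos_iff]; simp [List.length_dropLast]; omega
        have ih := rem_main a.dropLast.dropLast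
          (hds.sublist (List.dropLast_sublist _))
          (fun x hx => hd1 x ((List.dropLast_sublist _).mem hx)) hne''
        have hzy : a.dropLast.dropLast.getLast! < a.dropLast.getLast! :=
          sorted_last_lt a.dropLast hds (by simp [List.length_dropLast]; omega)
        simp only [List.length_append, List.length_cons, List.length_nil,
          List.length_dropLast] at ih ⊢
        omega
      · have hl2 : a.length = 2 := by omega
        have : a.dropLast.dropLast = [] := by
          rw [← List.length_eq_zero_iff]; simp [List.length_dropLast]; omega
        rw [this, rem, if_pos (by simp)]
        simp [hl2] at *; omega
    · rename_i hcond
      have hne' : a.dropLast ≠ [] := by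
        rw [← List.length_pos_iff, List.length_dropLast]; omega
      have ih := rem_main a.dropLast hds hd1 hne'
      rw [List.length_dropLast] at ih
      by_cases hc : a.getLast! % 2 = 0 ∧ a.dropLast.getLast! + 1 = a.getLast!
      · have hfail : 2 * a.length ≤ a.getLast! + (rem a.dropLast.dropLast).length + 1 := by
          omega
        have hodd : a.dropLast.getLast! % 2 = 1 := by omega
        rw [rem_odd a.dropLast hodd] at ih ⊢
        have heven := rem_len_even a.dropLast.dropLast
        omega
      · omega
termination_by a.length
decreasing_by
  all_goals (simp [List.length_dropLast]; omega)

/-- For a strictly increasing sequence `a` in `[2n]` of length `l ≤ 2n`: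
`0 ≤ l − |rem a| ≤ min (2n − l) l`; in particular `|rem a| ≥ 2(l − n)`
(stated in ℕ as `2l ≤ |rem a| + 2n`). -/
theorem stmt_13 (n : ℕ) (a : List ℕ) (hsorted : a.Pairwise (· < ·))
    (hbound : ∀ x ∈ a, 1 ≤ x ∧ x ≤ 2 * n) (hlen : a.length ≤ 2 * n) :
    (rem a).length ≤ a.length ∧
    a.length - (rem a).length ≤ min (2 * n - a.length) a.length ∧
    2 * a.length ≤ (rem a).length + 2 * n := by
  have h1 := rem_len_le a
  rcases eq_or_ne a [] with rfl | hne
  · simp [rem]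
  · have h2 := rem_main a hsorted (fun x hx => (hbound x hx).1) hne
    have hx : a.getLast! ≤ 2 * n := by
      rw [getLast!_eq' a hne]
      exact (hbound _ (List.getLast_mem hne)).2
    omega
end

section
/- Let a = (a_1,…,a_l) be a strictly increasing sequence of positive integers, and red(a) the subsequence obtained by deleting the entries of rem(a). Then red(a) is a symplectic column, i.e., its j-th entry is at least 2j−1 for all j. -/
/-- `red a` is obtained from `a` by deleting the entries of `rem a`. -/
def red (a : List ℕ) : List ℕ := a.filter (fun x => decide (x ∉ rem a))

lemma rem_nil : rem [] = [] := by simp [rem]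
lemma rem_singleton (x : ℕ) : rem [x] = [] := by simp [rem]

lemma getLast!_concat (b : List ℕ) (x : ℕ) : (b ++ [x]).getLast! = x := by
  induction b with
  | nil => rfl
  | cons h t ih => simp [List.getLast!, List.getLast_concat]

lemma rem_cc (b : List ℕ) (x y : ℕ) :
    rem (b ++ [x, y]) =
      if y % 2 = 0 ∧ x + 1 = y ∧ y + (rem b).length + 1 < 2 * (b.length + 2) then
        rem b ++ [x, y]
      else rem (b ++ [x]) := by
  have h1 : b ++ [x, y] = (b ++ [x]) ++ [y] := by simp
  have h2 : (b ++ [x, y]).getLast! = y := by rw [h1]; exact getLast!_concat _ _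
  rw [rem, h1]
  simp [getLast!_concat, List.dropLast_concat, h2]

lemma rem_len_mono : ∀ (b : List ℕ) (x : ℕ),
    (rem b).length ≤ (rem (b ++ [x])).length ∧
    (rem (b ++ [x])).length ≤ (rem b).length + 2 := by
  intro b
  induction b using List.reverseRecOn with
  | nil => intro x; simp [rem_nil, rem_singleton]
  | append_singleton c w ih =>
    intro x
    have h : c ++ [w] ++ [x] = c ++ [w, x] := by simp
    rw [h, rem_cc]
    rcases ih w with ⟨h1, h2⟩
    split <;> simp <;> omega

lemma main_lemma : ∀ (n : ℕ) (a : List ℕ), a.length ≤ n → a.Pairwise (· < ·) →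
    (∀ x ∈ a, 1 ≤ x) →
    (red a).length + (rem a).length = a.length ∧
    (∀ z ∈ rem a, z ∈ a) ∧
    ∀ j, j < (red a).length → 2 * j + 1 ≤ (red a).getD j 0 := by
  intro n
  induction n with
  | zero =>
    intro a hlen _ _
    have : a = [] := List.eq_nil_of_length_eq_zero (Nat.le_zero.mp hlen)
    subst this
    simp [red, rem_nil]
  | succ n ih =>
    intro a hlen hs hp
    rcases a.eq_nil_or_concat with rfl | ⟨c, y, rfl⟩
    · simp [red, rem_nil]
    rcases c.eq_nil_or_concat with rfl | ⟨b, x, rfl⟩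
    · -- a = [y]
      simp only [List.concat_eq_append, List.nil_append] at hp ⊢
      refine ⟨by simp [red, rem_singleton], by simp [rem_singleton], ?_⟩
      intro j h
      have hy : 1 ≤ y := hp y (by simp)
      have hr : red [y] = [y] := by simp [red, rem_singleton]
      rw [hr] at h ⊢
      simp at h
      subst h
      simpa using hy
    · -- a = b ++ [x, y]
      have ha : (b.concat x).concat y = b ++ [x, y] := by simp
      simp only [ha] at hs hp hlen ⊢
      -- sortedness facts
      have ha' : b ++ [x] ++ [y] = b ++ [x, y] := by simp
      have hsbx : (b ++ [x]).Pairwise (· < ·) :=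
        hs.sublist (by rw [← ha']; exact (List.sublist_append_left _ _))
      have hsb : b.Pairwise (· < ·) := hsbx.sublist (List.sublist_append_left _ _)
      have hltx : ∀ z ∈ b, z < x := by
        have := (List.pairwise_append.mp hsbx).2.2
        intro z hz; exact this z hz x (by simp)
      have hlty : ∀ z ∈ b ++ [x], z < y := by
        have hs' : ((b ++ [x]) ++ [y]).Pairwise (· < ·) := by rw [ha']; exact hs
        have := (List.pairwise_append.mp hs').2.2
        intro z hz; exact this z hz y (by simp)
      have hxy : x < y := hlty x (by simp)
      have hpbx : ∀ z ∈ b ++ [x], 1 ≤ z := by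
        intro z hz; apply hp z; simp at hz ⊢; tauto
      have hpb : ∀ z ∈ b, 1 ≤ z := fun z hz => hpbx z (by simp [hz])
      by_cases hc : y % 2 = 0 ∧ x + 1 = y ∧ y + (rem b).length + 1 < 2 * (b.length + 2)
      · -- removal case
        have hrem : rem (b ++ [x, y]) = rem b ++ [x, y] := by rw [rem_cc, if_pos hc]
        obtain ⟨ihl, ihm, ihs⟩ := ih b (by simp at hlen ⊢; omega) hsb hpb
        have hred : red (b ++ [x, y]) = red b := by
          unfold red
          rw [hrem, List.filter_append]
          have h2 : [x, y].filter (fun z => decide (z ∉ rem b ++ [x, y])) = [] := by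
            simp
          rw [h2, List.append_nil]
          apply List.filter_congr
          intro z hz
          have hzx := hltx z hz
          have hzy := hlty z (by simp [hz])
          simp only [decide_eq_decide, List.mem_append, List.mem_cons,
            List.mem_singleton, List.not_mem_nil]
          constructor
          · intro h hmem; exact h (Or.inl hmem)
          · intro h hmem
            rcases hmem with hmem | hmem
            · exact h hmem
            · simp at hmem; rcases hmem with rfl | rfl <;> omega
        refine ⟨?_, ?_, ?_⟩
        · rw [hred, hrem]; simp at ihl ⊢; omega
        · rw [hrem]; intro z hz
          rcases List.mem_append.mp hz with hz | hz
          · have := ihm z hz; simp [this]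
          · simp at hz ⊢; tauto
        · rw [hred]; exact ihs
      · -- otherwise case
        have hrem : rem (b ++ [x, y]) = rem (b ++ [x]) := by rw [rem_cc, if_neg hc]
        obtain ⟨ihl, ihm, ihs⟩ := ih (b ++ [x]) (by simp at hlen ⊢; omega) hsbx hpbx
        have hynotin : y ∉ rem (b ++ [x]) := by
          intro hy
          exact absurd (hlty y (ihm y hy)) (lt_irrefl y)
        have hred : red (b ++ [x, y]) = red (b ++ [x]) ++ [y] := by
          unfold red
          rw [hrem, ← ha', List.filter_append]
          congr 1
          simp [hynotin]
        set k := (red (b ++ [x])).length with hk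
        have hky : 2 * k + 1 ≤ y := by
          rcases Nat.eq_zero_or_pos k with hk0 | hk1
          · have := hp y (by simp); omega
          · have hklt : k - 1 < k := by omega
            have hc' := ihs (k - 1) hklt
            set c := (red (b ++ [x])).getD (k - 1) 0 with hcdef
            have hcm : c ∈ red (b ++ [x]) := by
              rw [hcdef, List.getD_eq_getElem _ _ hklt]
              exact List.getElem_mem _
            have hcm' : c ∈ b ++ [x] := List.filter_sublist.mem hcm
            have hcx : c ≤ x := by
              rcases List.mem_append.mp hcm' with h | h
              · exact le_of_lt (hltx c h)
              · simp at h; omega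
            by_contra hcon
            have hy2k : y = 2 * k := by omega
            apply hc
            refine ⟨by omega, by omega, ?_⟩
            have hmono := (rem_len_mono b x).1
            simp at ihl
            omega
        refine ⟨?_, ?_, ?_⟩
        · rw [hred, hrem]; simp at ihl ⊢; omega
        · rw [hrem]; intro z hz
          have := ihm z hz
          simp at this ⊢; tauto
        · rw [hred]
          intro j h
          simp only [List.length_append, List.length_singleton] at h
          rcases Nat.lt_or_ge j k with hj | hj
          · have hj' : j < (red (b ++ [x]) ++ [y]).length := by simp; omega
            rw [List.getD_eq_getElem _ _ hj', List.getElem_append_left hj]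
            have := ihs j hj
            rwa [List.getD_eq_getElem _ _ hj] at this
          · have hjk : j = k := by omega
            have hj' : j < (red (b ++ [x]) ++ [y]).length := by simp; omega
            rw [List.getD_eq_getElem _ _ hj', List.getElem_concat_length hjk]
            omega

/-- For a strictly increasing sequence of positive integers `a`, the reduction `red a`
is a symplectic column: its `j`-th entry (1-indexed) is at least `2j−1`, i.e. 0-indexed
`(red a)[j] ≥ 2j+1`. -/
theorem stmt_14 (a : List ℕ) (hsorted : a.Pairwise (· < ·)) (hpos : ∀ x ∈ a, 1 ≤ x) :
    ∀ j (h : j < (red a).length), 2 * j + 1 ≤ (red a).get ⟨j, h⟩ := by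
  intro j h
  have := (main_lemma a.length a le_rfl hsorted hpos).2.2 j h
  rwa [List.getD_eq_getElem _ _ h] at this
end
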